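/- arXiv:1202.3433 — 2 statements merged into one kernel-verified Lean document; each statement's English description precedes it below -/
import Mathlib

section
/- Let n ≥ 1 and let P be an n × n matrix over 𝔽₂ with P Pᵀ = I, and let G be the associated bipartite graph on V = L ⊔ R. Then for every subset D ⊆ R and every vertex i ∈ R with i ∉ D, the cardinality |Odd(D) ∩ N_i| is even. -/
open Matrix

/-- The bipartite graph on `Fin n ⊕ Fin n` (left copy `L = Sum.inl`, right copy
`R = Sum.inr`) in which `Sum.inl a` is adjacent to `Sum.inr b` iff `P a b = 1`,
and there are no other edges. -/
def bipGraph (n : ℕ) (P : Matrix (Fin n) (Fin n) (ZMod 2)) :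
    SimpleGraph (Fin n ⊕ Fin n) where
  Adj u v := (∃ a b, P a b = 1 ∧ u = Sum.inl a ∧ v = Sum.inr b) ∨
             (∃ a b, P a b = 1 ∧ u = Sum.inr b ∧ v = Sum.inl a)
  symm := by
    constructor
    rintro u v (⟨a, b, h, rfl, rfl⟩ | ⟨a, b, h, rfl, rfl⟩)
    · exact Or.inr ⟨a, b, h, rfl, rfl⟩
    · exact Or.inl ⟨a, b, h, rfl, rfl⟩
  loopless := by
    constructor
    rintro u (⟨a, b, h, rfl, h2⟩ | ⟨a, b, h, rfl, h2⟩) <;> simp at h2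

/-- The odd neighbourhood of a set `S`: the set of vertices `v` such that the number
of neighbours of `v` lying in `S` is odd. -/
def oddNbhd {V : Type*} (G : SimpleGraph V) (S : Set V) : Set V :=
  {v | Odd (G.neighborSet v ∩ S).ncard}

lemma even_iff_zmod2 (m : ℕ) : Even m ↔ (m : ZMod 2) = 0 := by
  rw [Nat.even_iff, ← ZMod.natCast_mod m 2]
  rcases Nat.mod_two_eq_zero_or_one m with h | h <;> simp [h]

lemma odd_iff_zmod2 (m : ℕ) : Odd m ↔ (m : ZMod 2) = 1 := by
  rw [Nat.odd_iff, ← ZMod.natCast_mod m 2]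
  rcases Nat.mod_two_eq_zero_or_one m with h | h <;> simp [h]

lemma zmod2_cases (x : ZMod 2) : x = 0 ∨ x = 1 := by revert x; decide

/-- if `P Pᵀ = I` then for every subset `D ⊆ R` and every vertex
`i ∈ R` with `i ∉ D`, the cardinality `|Odd(D) ∩ N_i|` is even. -/
theorem stmt1 (n : ℕ) (hn : 1 ≤ n) (P : Matrix (Fin n) (Fin n) (ZMod 2))
    (hP : P * Pᵀ = 1) (D : Set (Fin n ⊕ Fin n)) (hD : D ⊆ Set.range Sum.inr)
    (i : Fin n) (hi : Sum.inr i ∉ D) :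
    Even ((oddNbhd (bipGraph n P) D ∩ (bipGraph n P).neighborSet (Sum.inr i)).ncard) := by
  classical
  set Dr : Finset (Fin n) := Finset.univ.filter (fun b => Sum.inr b ∈ D) with hDr
  set F : Finset (Fin n) := Finset.univ.filter
    (fun a => P a i = 1 ∧
      Odd ((Finset.univ.filter (fun b => P a b = 1 ∧ Sum.inr b ∈ D)).card)) with hF
  -- neighbours of a right vertex
  have hNi : (bipGraph n P).neighborSet (Sum.inr i) = Sum.inl '' {a | P a i = 1} := by
    ext v
    simp only [SimpleGraph.mem_neighborSet, bipGraph, Set.mem_image, Set.mem_setOf_eq]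
    constructor
    · rintro (⟨a, b, h, h1, h2⟩ | ⟨a, b, h, h1, h2⟩)
      · simp at h1
      · cases Sum.inr.inj h1; exact ⟨a, h, h2.symm⟩
    · rintro ⟨a, h, rfl⟩; exact Or.inr ⟨a, i, h, rfl, rfl⟩
  -- neighbours of a left vertex
  have hNl : ∀ a, (bipGraph n P).neighborSet (Sum.inl a) = Sum.inr '' {b | P a b = 1} := by
    intro a
    ext v
    simp only [SimpleGraph.mem_neighborSet, bipGraph, Set.mem_image, Set.mem_setOf_eq]
    constructor
    · rintro (⟨a', b, h, h1, h2⟩ | ⟨a', b, h, h1, h2⟩)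
      · cases Sum.inl.inj h1; exact ⟨b, h, h2.symm⟩
      · simp at h1
    · rintro ⟨b, h, rfl⟩; exact Or.inl ⟨a, b, h, rfl, rfl⟩
  -- membership of a left vertex in the odd neighbourhood of D
  have hodd : ∀ a, (Sum.inl a ∈ oddNbhd (bipGraph n P) D ↔
      Odd ((Finset.univ.filter (fun b => P a b = 1 ∧ Sum.inr b ∈ D)).card)) := by
    intro a
    have h1 : (bipGraph n P).neighborSet (Sum.inl a) ∩ D
        = Sum.inr '' ↑(Finset.univ.filter (fun b => P a b = 1 ∧ Sum.inr b ∈ D)) := by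
      rw [hNl a]
      ext v
      simp only [Set.mem_inter_iff, Set.mem_image, Set.mem_setOf_eq, Finset.coe_filter,
        Finset.mem_univ, true_and]
      constructor
      · rintro ⟨⟨b, hb, rfl⟩, hv⟩; exact ⟨b, ⟨hb, hv⟩, rfl⟩
      · rintro ⟨b, ⟨hb, hv⟩, rfl⟩; exact ⟨⟨b, hb, rfl⟩, hv⟩
    rw [oddNbhd, Set.mem_setOf_eq, h1,
      Set.ncard_image_of_injective _ Sum.inr_injective, Set.ncard_coe_finset]
  -- the set in question is the image of F
  have hmain : oddNbhd (bipGraph n P) D ∩ (bipGraph n P).neighborSet (Sum.inr i)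
      = Sum.inl '' (F : Set (Fin n)) := by
    rw [hNi]
    ext v
    constructor
    · rintro ⟨ho, a, ha, rfl⟩
      exact ⟨a, by simp only [hF, Finset.coe_filter, Finset.mem_univ, true_and,
        Set.mem_setOf_eq]; exact ⟨ha, (hodd a).mp ho⟩, rfl⟩
    · rintro ⟨a, ha, rfl⟩
      simp only [hF, Finset.coe_filter, Finset.mem_univ, true_and, Set.mem_setOf_eq] at ha
      exact ⟨(hodd a).mpr ha.2, a, ha.1, rfl⟩
  rw [hmain, Set.ncard_image_of_injective _ Sum.inl_injective, Set.ncard_coe_finset,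
    even_iff_zmod2]
  -- express the cardinality as a ZMod 2 sum
  have hcard : ((F.card : ZMod 2)) = ∑ a : Fin n, (if a ∈ F then (1 : ZMod 2) else 0) := by
    rw [Finset.sum_boole, Finset.filter_mem_eq_inter, Finset.univ_inter]
  -- the indicator equals P a i * row sum
  have hind : ∀ a : Fin n,
      (if a ∈ F then (1 : ZMod 2) else 0) = P a i * ∑ b ∈ Dr, P a b := by
    intro a
    have hsum : (∑ b ∈ Dr, P a b)
        = ((Finset.univ.filter (fun b => P a b = 1 ∧ Sum.inr b ∈ D)).card : ZMod 2) := by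
      have : ∀ b ∈ Dr, P a b = if P a b = 1 then (1 : ZMod 2) else 0 := by
        intro b _
        rcases zmod2_cases (P a b) with h | h <;> simp [h]
      rw [Finset.sum_congr rfl this, Finset.sum_boole, hDr, Finset.filter_filter]
      have hfe : (Finset.univ.filter (fun b => Sum.inr b ∈ D ∧ P a b = 1))
          = Finset.univ.filter (fun b => P a b = 1 ∧ Sum.inr b ∈ D) := by
        ext b; simp [and_comm]
      rw [hfe]
    rcases zmod2_cases (P a i) with h | h
    · have : a ∉ F := by
        simp only [hF, Finset.mem_filter, Finset.mem_univ, true_and]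
        rintro ⟨h1, -⟩
        rw [h] at h1
        exact absurd h1 (by decide)
      simp [this, h]
    · rw [h, one_mul, hsum]
      by_cases hodd' : Odd ((Finset.univ.filter (fun b => P a b = 1 ∧ Sum.inr b ∈ D)).card)
      · have haF : a ∈ F := by
          simp only [hF, Finset.mem_filter, Finset.mem_univ, true_and]
          exact ⟨h, hodd'⟩
        rw [if_pos haF]; exact ((odd_iff_zmod2 _).mp hodd').symm
      · have haF : a ∉ F := by
          simp only [hF, Finset.mem_filter, Finset.mem_univ, true_and]
          rintro ⟨-, h2⟩; exact hodd' h2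
        rw [if_neg haF]
        exact ((even_iff_zmod2 _).mp (Nat.not_odd_iff_even.mp hodd')).symm
  -- compute the double sum using PᵀP = 1
  have hPtP : Pᵀ * P = 1 := mul_eq_one_comm.mp hP
  have hzero : (∑ a : Fin n, P a i * ∑ b ∈ Dr, P a b) = 0 := by
    have : (∑ a : Fin n, P a i * ∑ b ∈ Dr, P a b)
        = ∑ b ∈ Dr, ∑ a : Fin n, P a b * P a i := by
      simp_rw [Finset.mul_sum]
      rw [Finset.sum_comm]
      refine Finset.sum_congr rfl fun b _ => Finset.sum_congr rfl fun a _ => by ring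
    rw [this]
    apply Finset.sum_eq_zero
    intro b hb
    have hbD : Sum.inr b ∈ D := by
      simp only [hDr, Finset.mem_filter, Finset.mem_univ, true_and] at hb
      exact hb
    have hbi : b ≠ i := fun h => hi (h ▸ hbD)
    have : (∑ a : Fin n, P a b * P a i) = (Pᵀ * P) b i := by
      simp [Matrix.mul_apply]
    rw [this, hPtP, Matrix.one_apply_ne hbi]
  rw [hcard, Finset.sum_congr rfl (fun a _ => hind a), hzero]
end

section
/- Let n ≥ 1, let P be an n × n matrix over 𝔽₂ with P Pᵀ = I, and let G be the associated bipartite graph on V = L ⊔ R. Then for every subset D ⊆ R, the operator U_D = Z_D X_{Odd(D)} stabilizes the graph state: Z_D X_{Odd(D)} |G⟩ = |G⟩. -/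
open Matrix

/-- The quadratic form of a graph: `q(x) = ∑_{{u,v} ∈ E(H)} x_u x_v` over `𝔽₂`. -/
noncomputable def qForm {W : Type*} (H : SimpleGraph W) (x : W → ZMod 2) : ZMod 2 :=
  ∑ᶠ e ∈ H.edgeSet, Sym2.lift ⟨fun u v => x u * x v, fun _ _ => mul_comm _ _⟩ e

/-- The graph state of `H`: the vector in `ℂ^(W → ZMod 2)` with amplitude
`2^{-|W|/2} (-1)^{q(x)}` at the basis label `x`. -/
noncomputable def graphState {W : Type*} (H : SimpleGraph W) : (W → ZMod 2) → ℂ :=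
  fun x => (Real.sqrt 2 : ℂ)⁻¹ ^ Nat.card W * (-1 : ℂ) ^ (qForm H x).val

/-- The Pauli operator `X_S = ∏_{w ∈ S} X_w`, acting by `(X_S ψ)(x) = ψ(x + 1_S)`. -/
noncomputable def XOp {W : Type*} (S : Set W) (ψ : (W → ZMod 2) → ℂ) : (W → ZMod 2) → ℂ :=
  fun x => ψ (x + S.indicator 1)

/-- The Pauli operator `Z_S = ∏_{w ∈ S} Z_w`, acting by
`(Z_S ψ)(x) = (-1)^{∑_{w ∈ S} x_w} ψ(x)`. -/
noncomputable def ZOp {W : Type*} (S : Set W) (ψ : (W → ZMod 2) → ℂ) : (W → ZMod 2) → ℂ :=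
  fun x => (-1 : ℂ) ^ (∑ᶠ w ∈ S, (x w).val) * ψ x

/- ### Auxiliary lemmas -/

lemma zmod2_em (t : ZMod 2) : t = 0 ∨ t = 1 := by revert t; decide

lemma zmod2_cast_val (t : ZMod 2) : ((t.val : ℕ) : ZMod 2) = t := by
  rcases zmod2_em t with h | h <;> subst h <;> rfl

lemma neg_one_pow_mod (m : ℕ) : ((-1 : ℂ)) ^ m = (-1 : ℂ) ^ (m % 2) := by
  conv_lhs => rw [← Nat.div_add_mod m 2]
  rw [pow_add, pow_mul]; norm_num

lemma neg_one_pow_nat (m : ℕ) : ((-1 : ℂ)) ^ m = (-1 : ℂ) ^ ((m : ZMod 2)).val := by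
  rw [ZMod.val_natCast, neg_one_pow_mod]

lemma chi_add (u v : ZMod 2) :
    (-1 : ℂ) ^ ((u + v).val) = (-1 : ℂ) ^ u.val * (-1 : ℂ) ^ v.val := by
  rw [ZMod.val_add, ← neg_one_pow_mod, pow_add]

lemma odd_iff_cast (m : ℕ) : Odd m ↔ ((m : ZMod 2)) = 1 := by
  rw [Nat.odd_iff]
  constructor
  · intro h
    have h' : ((m : ZMod 2)).val = 1 := by rw [ZMod.val_natCast, h]
    rcases zmod2_em (m : ZMod 2) with h0 | h1
    · rw [h0] at h'; simp at h'
    · exact h1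
  · intro h
    have := ZMod.val_natCast (n := 2) m
    rw [h] at this
    exact this.symm

lemma ite_eq_mul (t u : ZMod 2) [Decidable (t = 1)] : (if t = 1 then u else 0) = t * u := by
  rcases zmod2_em t with h | h <;> simp [h]

lemma bip_edgeSet {n : ℕ} (P : Matrix (Fin n) (Fin n) (ZMod 2)) :
    (bipGraph n P).edgeSet =
      (fun p : Fin n × Fin n => s(Sum.inl p.1, Sum.inr p.2)) '' {p | P p.1 p.2 = 1} := by
  ext e
  induction e with
  | _ u v =>
    simp only [SimpleGraph.mem_edgeSet, bipGraph, Set.mem_image, Set.mem_setOf_eq, Prod.exists]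
    constructor
    · rintro (⟨a, b, h, rfl, rfl⟩ | ⟨a, b, h, rfl, rfl⟩)
      · exact ⟨a, b, h, rfl⟩
      · exact ⟨a, b, h, Sym2.eq_swap⟩
    · rintro ⟨a, b, h, he⟩
      rw [Sym2.eq_iff] at he
      rcases he with ⟨rfl, rfl⟩ | ⟨rfl, rfl⟩
      · exact Or.inl ⟨a, b, h, rfl, rfl⟩
      · exact Or.inr ⟨a, b, h, rfl, rfl⟩

lemma bip_inj {n : ℕ} : Function.Injective
    (fun p : Fin n × Fin n => s(Sum.inl p.1, Sum.inr p.2)) := by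
  rintro ⟨a, b⟩ ⟨a', b'⟩ h
  simp only [Sym2.eq_iff] at h
  rcases h with ⟨h1, h2⟩ | ⟨h1, h2⟩ <;> simp_all

lemma qForm_eq {n : ℕ} (P : Matrix (Fin n) (Fin n) (ZMod 2))
    (x : (Fin n ⊕ Fin n) → ZMod 2) :
    qForm (bipGraph n P) x = ∑ a, ∑ b, P a b * (x (Sum.inl a) * x (Sum.inr b)) := by
  classical
  unfold qForm
  rw [bip_edgeSet, finsum_mem_image (bip_inj (n := n)).injOn]
  have hset : {p : Fin n × Fin n | P p.1 p.2 = 1}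
      = ↑(Finset.univ.filter fun p : Fin n × Fin n => P p.1 p.2 = 1) := by
    ext p; simp
  rw [hset, finsum_mem_coe_finset, Finset.sum_filter, Fintype.sum_prod_type]
  refine Finset.sum_congr rfl fun a _ => Finset.sum_congr rfl fun b _ => ?_
  simp only [Sym2.lift_mk]
  rw [ite_eq_mul]

lemma mem_oddNbhd_inl {n : ℕ} (P : Matrix (Fin n) (Fin n) (ZMod 2))
    (D : Set (Fin n ⊕ Fin n)) (a : Fin n) :
    Sum.inl a ∈ oddNbhd (bipGraph n P) D ↔
      (∑ b, P a b * D.indicator (1 : (Fin n ⊕ Fin n) → ZMod 2) (Sum.inr b)) = 1 := by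
  classical
  have hset : (bipGraph n P).neighborSet (Sum.inl a) ∩ D
      = Sum.inr '' {b | P a b = 1 ∧ Sum.inr b ∈ D} := by
    ext v
    simp only [SimpleGraph.mem_neighborSet, bipGraph, Set.mem_inter_iff, Set.mem_image,
      Set.mem_setOf_eq]
    constructor
    · rintro ⟨(⟨a', b, h, ha, rfl⟩ | ⟨a', b, h, ha, rfl⟩), hv⟩
      · cases ha; exact ⟨b, ⟨h, hv⟩, rfl⟩
      · simp at ha
    · rintro ⟨b, ⟨h, hb⟩, rfl⟩
      exact ⟨Or.inl ⟨a, b, h, rfl, rfl⟩, hb⟩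
  have hcard : ((bipGraph n P).neighborSet (Sum.inl a) ∩ D).ncard
      = (Finset.univ.filter fun b => P a b = 1 ∧ Sum.inr b ∈ D).card := by
    rw [hset, Set.ncard_image_of_injective _ Sum.inr_injective, ← Set.ncard_coe_finset]
    congr 1
    ext b; simp
  show Odd _ ↔ _
  rw [hcard, odd_iff_cast, Finset.card_filter]
  push_cast
  refine Eq.congr ?_ rfl
  refine Finset.sum_congr rfl fun b _ => ?_
  rcases zmod2_em (P a b) with h | h <;>
    by_cases hb : Sum.inr b ∈ D <;>
      simp [h, hb, Set.indicator_of_mem, Set.indicator_of_notMem]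

lemma not_mem_oddNbhd_inr {n : ℕ} (P : Matrix (Fin n) (Fin n) (ZMod 2))
    (D : Set (Fin n ⊕ Fin n)) (hD : D ⊆ Set.range Sum.inr) (b : Fin n) :
    Sum.inr b ∉ oddNbhd (bipGraph n P) D := by
  have hset : (bipGraph n P).neighborSet (Sum.inr b) ∩ D = ∅ := by
    ext v
    simp only [SimpleGraph.mem_neighborSet, bipGraph, Set.mem_inter_iff, Set.mem_empty_iff_false,
      iff_false, not_and]
    rintro (⟨a', b', h, ha, rfl⟩ | ⟨a', b', h, ha, rfl⟩) hv
    · simp at ha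
    · obtain ⟨c, hc⟩ := hD hv; simp at hc
  intro hmem
  have h0 : Odd ((bipGraph n P).neighborSet (Sum.inr b) ∩ D).ncard := hmem
  rw [hset] at h0
  simp at h0

lemma zop_sum {n : ℕ} (D : Set (Fin n ⊕ Fin n)) (hD : D ⊆ Set.range Sum.inr)
    (x : (Fin n ⊕ Fin n) → ZMod 2) :
    ((∑ᶠ w ∈ D, (x w).val : ℕ) : ZMod 2)
      = ∑ b, D.indicator (1 : (Fin n ⊕ Fin n) → ZMod 2) (Sum.inr b) * x (Sum.inr b) := by
  classical
  have hDim : Sum.inr '' (Sum.inr ⁻¹' D) = D := Set.image_preimage_eq_of_subset hD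
  conv_lhs => rw [← hDim, finsum_mem_image Sum.inr_injective.injOn]
  rw [finsum_mem_eq_toFinset_sum, Nat.cast_sum]
  have h1 : ∀ b ∈ (Sum.inr ⁻¹' D : Set (Fin n)).toFinset,
      (((x (Sum.inr b)).val : ℕ) : ZMod 2)
        = D.indicator (1 : (Fin n ⊕ Fin n) → ZMod 2) (Sum.inr b) * x (Sum.inr b) := by
    intro b hb
    rw [Set.mem_toFinset] at hb
    rw [zmod2_cast_val, Set.indicator_of_mem (show Sum.inr b ∈ D from hb), Pi.one_apply, one_mul]
  rw [Finset.sum_congr rfl h1]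
  refine Finset.sum_subset (Finset.subset_univ _) fun b _ hb => ?_
  rw [Set.mem_toFinset] at hb
  rw [Set.indicator_of_notMem (show Sum.inr b ∉ D from hb), zero_mul]

lemma key_id {n : ℕ} (P : Matrix (Fin n) (Fin n) (ZMod 2)) (hP : P * Pᵀ = 1)
    (xL xR d : Fin n → ZMod 2) :
    (∑ b, d b * xR b) + (∑ a, ∑ b, P a b * ((xL a + (P *ᵥ d) a) * xR b))
      = ∑ a, ∑ b, P a b * (xL a * xR b) := by
  have hP2 : Pᵀ * P = 1 := mul_eq_one_comm.mp hP
  have h1 : ∀ a, ∀ b, P a b * ((xL a + (P *ᵥ d) a) * xR b)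
      = P a b * (xL a * xR b) + P a b * ((P *ᵥ d) a * xR b) := by intros; ring
  simp_rw [h1, Finset.sum_add_distrib]
  have hextra : (∑ a, ∑ b, P a b * ((P *ᵥ d) a * xR b)) = (P *ᵥ d) ⬝ᵥ (P *ᵥ xR) := by
    simp only [dotProduct, mulVec, Finset.mul_sum]
    refine Finset.sum_congr rfl fun a _ => Finset.sum_congr rfl fun b _ => ?_
    ring
  have hmat : (P *ᵥ d) ⬝ᵥ (P *ᵥ xR) = ∑ b, d b * xR b := by
    rw [dotProduct_mulVec, ← vecMul_transpose, vecMul_vecMul, hP2, vecMul_one]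
    rfl
  rw [hextra, hmat]
  have h2 : ∀ t : ZMod 2, t + t = 0 := by decide
  rw [add_left_comm, h2, add_zero]

/-- for the bipartite graph `G` of `P` with `P Pᵀ = I` and any `D ⊆ R`,
the operator `U_D = Z_D X_{Odd(D)}` stabilizes the graph state:
`Z_D X_{Odd(D)} |G⟩ = |G⟩`. -/
theorem stmt8 (n : ℕ) (hn : 1 ≤ n) (P : Matrix (Fin n) (Fin n) (ZMod 2))
    (hP : P * Pᵀ = 1) (D : Set (Fin n ⊕ Fin n)) (hD : D ⊆ Set.range Sum.inr) :
    ZOp D (XOp (oddNbhd (bipGraph n P) D) (graphState (bipGraph n P))) =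
      graphState (bipGraph n P) := by
  classical
  funext x
  set O := oddNbhd (bipGraph n P) D with hO
  set σ := O.indicator (1 : (Fin n ⊕ Fin n) → ZMod 2) with hσ
  set d : Fin n → ZMod 2 := fun b => D.indicator (1 : (Fin n ⊕ Fin n) → ZMod 2) (Sum.inr b)
    with hd
  have hσl : ∀ a, σ (Sum.inl a) = (P *ᵥ d) a := by
    intro a
    have hmv : (P *ᵥ d) a = ∑ b, P a b * d b := rfl
    rcases zmod2_em ((P *ᵥ d) a) with h | h
    · rw [h, hσ, Set.indicator_of_notMem, ]
      rw [hO, mem_oddNbhd_inl, ← hmv, h]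
      decide
    · rw [h, hσ, Set.indicator_of_mem, Pi.one_apply]
      rw [hO, mem_oddNbhd_inl, ← hmv, h]
  have hσr : ∀ b, σ (Sum.inr b) = 0 := by
    intro b
    rw [hσ, Set.indicator_of_notMem (not_mem_oddNbhd_inr P D hD b)]
  show (-1 : ℂ) ^ (∑ᶠ w ∈ D, (x w).val) *
      ((Real.sqrt 2 : ℂ)⁻¹ ^ Nat.card (Fin n ⊕ Fin n) * (-1 : ℂ) ^ (qForm (bipGraph n P) (x + σ)).val)
      = (Real.sqrt 2 : ℂ)⁻¹ ^ Nat.card (Fin n ⊕ Fin n) * (-1 : ℂ) ^ (qForm (bipGraph n P) x).val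
  have hS : (((∑ᶠ w ∈ D, (x w).val : ℕ)) : ZMod 2) = ∑ b, d b * x (Sum.inr b) :=
    zop_sum D hD x
  rw [neg_one_pow_nat (∑ᶠ w ∈ D, (x w).val), hS, mul_left_comm]
  congr 1
  rw [← chi_add]
  have heq : (∑ b, d b * x (Sum.inr b)) + qForm (bipGraph n P) (x + σ)
      = qForm (bipGraph n P) x := by
    rw [qForm_eq, qForm_eq]
    have hx : ∀ a b, (x + σ) (Sum.inl a) * (x + σ) (Sum.inr b)
        = (x (Sum.inl a) + (P *ᵥ d) a) * x (Sum.inr b) := by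
      intro a b
      simp only [Pi.add_apply, hσl, hσr, add_zero]
    simp_rw [hx]
    exact key_id P hP (fun a => x (Sum.inl a)) (fun b => x (Sum.inr b)) d
  rw [heq]
end
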